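/- Let x, y be two elements of (L^0)^n. Then there exist sets A, B ∈ F such that: (1) A ∩ B = ∅ and A ∪ B = Ω; (2) whenever ξ, η ∈ L^0 satisfy ξx + ηy = θ, one has Ĩ_A ξ = 0 and Ĩ_A η = 0; (3) if x and y are L^0-independent then P(B) = 0, and if x and y are not L^0-independent then P(B) > 0 and there exist ξ, η ∈ L^0 with |ξ| + |η| ≠ 0 almost everywhere on B and ξx + ηy = θ. -/

import Mathlib

/-!
Statements from "The fundamental theorem of affine geometry in `(L⁰)ⁿ`" (Wu–Long).

`L⁰`, the algebra of equivalence classes (under `P`-a.e. equality) of real valued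
random variables on a probability space `(Ω, F, P)`, is modeled as `Ω →ₘ[P] ℝ`,
and `(L⁰)ⁿ` as `Fin n → (Ω →ₘ[P] ℝ)` with the pointwise `L⁰`-module structure.
-/

open MeasureTheory

noncomputable section

variable {Ω : Type*} [MeasurableSpace Ω] {P : Measure Ω}

/-- `L⁰ = Ω →ₘ[P] ℝ` is a commutative ring under the pointwise a.e. operations. -/
instance : CommRing (Ω →ₘ[P] ℝ) :=
  { (inferInstance : AddCommGroup (Ω →ₘ[P] ℝ)),
    (inferInstance : CommMonoid (Ω →ₘ[P] ℝ)) with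
    left_distrib := fun a b c => AEEqFun.toGerm_injective <| by
      simp only [AEEqFun.mul_toGerm, AEEqFun.add_toGerm, mul_add]
    right_distrib := fun a b c => AEEqFun.toGerm_injective <| by
      simp only [AEEqFun.mul_toGerm, AEEqFun.add_toGerm, add_mul]
    zero_mul := fun a => AEEqFun.toGerm_injective <| by
      simp only [AEEqFun.mul_toGerm, AEEqFun.zero_toGerm, zero_mul]
    mul_zero := fun a => AEEqFun.toGerm_injective <| by
      simp only [AEEqFun.mul_toGerm, AEEqFun.zero_toGerm, mul_zero] }

/-- `Ĩ_A` : the equivalence class of the indicator function of a measurable set `A`. -/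
def ind (P : Measure Ω) {A : Set Ω} (hA : MeasurableSet A) : Ω →ₘ[P] ℝ :=
  AEEqFun.mk (A.indicator fun _ => (1 : ℝ)) (aestronglyMeasurable_const.indicator hA)

private lemma minor_vanish {n : ℕ} (a b : ℝ) (u v : Fin n → ℝ)
    (h : ∀ i, a * u i + b * v i = 0) (i j : Fin n) :
    a * (u i * v j - u j * v i) = 0 ∧ b * (u i * v j - u j * v i) = 0 :=
  ⟨by linear_combination v j * h i - v i * h j,
   by linear_combination u i * h j - u j * h i⟩

private lemma ptwise_indep {n : ℕ} (a b : ℝ) (u v : Fin n → ℝ)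
    (h : ∀ i, a * u i + b * v i = 0)
    (hA : ¬ ∀ i j, u i * v j = u j * v i) : a = 0 ∧ b = 0 := by
  push_neg at hA
  obtain ⟨i, j, hij⟩ := hA
  obtain ⟨h1, h2⟩ := minor_vanish a b u v h i j
  have hm : u i * v j - u j * v i ≠ 0 := sub_ne_zero.mpr hij
  exact ⟨by rcases mul_eq_zero.mp h1 with h | h; exact h; exact absurd h hm,
         by rcases mul_eq_zero.mp h2 with h | h; exact h; exact absurd h hm⟩

/-- Proposition 2.1: for `x y : (L⁰)ⁿ` there is a measurable
decomposition `Ω = A ∪ B` such that `x, y` are `L⁰`-independent on `A` and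
non-`L⁰`-independent on `B`. -/
theorem exists_independence_decomposition
    [IsProbabilityMeasure P] (n : ℕ) (x y : Fin n → Ω →ₘ[P] ℝ) :
    ∃ (A B : Set Ω) (hA : MeasurableSet A) (_hB : MeasurableSet B),
      A ∩ B = ∅ ∧ A ∪ B = Set.univ ∧
      (∀ ξ η : Ω →ₘ[P] ℝ, ξ • x + η • y = 0 → ind P hA * ξ = 0 ∧ ind P hA * η = 0) ∧
      ((∀ ξ η : Ω →ₘ[P] ℝ, ξ • x + η • y = 0 → ξ = 0 ∧ η = 0) → P B = 0) ∧
      (¬ (∀ ξ η : Ω →ₘ[P] ℝ, ξ • x + η • y = 0 → ξ = 0 ∧ η = 0) →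
        0 < P B ∧ ∃ ξ η : Ω →ₘ[P] ℝ,
          (∀ᵐ ω ∂P, ω ∈ B → |ξ ω| + |η ω| ≠ 0) ∧ ξ • x + η • y = 0) := by
  classical
  -- B : the set where the canonical representatives of x, y are pointwise dependent
  set B : Set Ω := {ω | ∀ i j : Fin n, x i ω * y j ω = x j ω * y i ω} with hBdef
  have hB : MeasurableSet B := by
    have : B = ⋂ (i : Fin n) (j : Fin n),
        {ω | x i ω * y j ω = x j ω * y i ω} := by
      ext ω; simp [hBdef, Set.mem_iInter]
    rw [this]
    exact MeasurableSet.iInter fun i => MeasurableSet.iInter fun j =>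
      measurableSet_eq_fun ((x i).measurable.mul (y j).measurable)
        ((x j).measurable.mul (y i).measurable)
  have hA : MeasurableSet Bᶜ := hB.compl
  -- translate the module equation into a pointwise a.e. statement
  have key : ∀ ξ η : Ω →ₘ[P] ℝ, ξ • x + η • y = 0 →
      ∀ᵐ ω ∂P, ∀ i : Fin n, ξ ω * x i ω + η ω * y i ω = 0 := by
    intro ξ η h
    rw [ae_all_iff]
    intro i
    have hi : ξ * x i + η * y i = 0 := congrFun h i
    have h0 : ⇑(ξ * x i + η * y i) =ᵐ[P] 0 := by rw [hi]; exact AEEqFun.coeFn_zero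
    filter_upwards [h0, AEEqFun.coeFn_add (ξ * x i) (η * y i),
      AEEqFun.coeFn_mul ξ (x i), AEEqFun.coeFn_mul η (y i)] with ω e0 e1 e2 e3
    have := e1.symm.trans e0
    simp only [Pi.add_apply, Pi.zero_apply] at this
    rw [e2, e3] at this
    exact this
  -- on Bᶜ any a.e. relation forces the coefficients to vanish a.e.
  have forceA : ∀ ξ η : Ω →ₘ[P] ℝ, ξ • x + η • y = 0 →
      ∀ᵐ ω ∂P, ω ∈ Bᶜ → ξ ω = 0 ∧ η ω = 0 := by
    intro ξ η h
    filter_upwards [key ξ η h] with ω hω hωA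
    exact ptwise_indep _ _ _ _ hω hωA
  -- the canonical non-trivial solution on B
  set s : Ω → ℝ := fun ω => ∑ i, x i ω ^ 2 with hs
  set t : Ω → ℝ := fun ω => ∑ i, y i ω * x i ω with ht
  have hsm : Measurable s := Finset.measurable_sum _ fun i _ => (x i).measurable.pow_const 2
  have htm : Measurable t := Finset.measurable_sum _ fun i _ => (y i).measurable.mul (x i).measurable
  set ξ₀ : Ω → ℝ := B.indicator fun ω => if s ω = 0 then 1 else t ω / s ω with hxi0
  set η₀ : Ω → ℝ := B.indicator fun ω => if s ω = 0 then 0 else -1 with heta0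
  have hξ₀m : Measurable ξ₀ :=
    (Measurable.ite (hsm (measurableSet_singleton 0)) measurable_const
      (htm.div hsm)).indicator hB
  have hη₀m : Measurable η₀ :=
    (Measurable.ite (hsm (measurableSet_singleton 0)) measurable_const
      measurable_const).indicator hB
  -- exact pointwise solution
  have hsolve : ∀ ω, ∀ i : Fin n, ξ₀ ω * x i ω + η₀ ω * y i ω = 0 := by
    intro ω i
    by_cases hωB : ω ∈ B
    · simp only [hxi0, heta0, Set.indicator_of_mem hωB]
      by_cases hs0 : s ω = 0
      · have hx0 : x i ω = 0 := by
          have := (Finset.sum_eq_zero_iff_of_nonneg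
            (fun j _ => sq_nonneg (x j ω))).mp hs0 i (Finset.mem_univ i)
          exact pow_eq_zero_iff (two_ne_zero) |>.mp this
        simp [hs0, hx0]
      · simp only [if_neg hs0]
        have hdep : y i ω * s ω = x i ω * t ω := by
          simp only [hs, ht, Finset.mul_sum]
          refine Finset.sum_congr rfl fun j _ => ?_
          linear_combination (x j ω) * hωB j i
        field_simp
        linarith [hdep]
    · simp [hxi0, heta0, Set.indicator_of_notMem hωB]
  have hnontriv : ∀ ω ∈ B, |ξ₀ ω| + |η₀ ω| ≠ 0 := by
    intro ω hωB
    simp only [hxi0, heta0, Set.indicator_of_mem hωB]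
    by_cases hs0 : s ω = 0 <;> simp [hs0] <;> positivity
  set Ξ : Ω →ₘ[P] ℝ := AEEqFun.mk ξ₀ hξ₀m.aestronglyMeasurable with hΞ
  set H : Ω →ₘ[P] ℝ := AEEqFun.mk η₀ hη₀m.aestronglyMeasurable with hH
  have hΞc : ⇑Ξ =ᵐ[P] ξ₀ := AEEqFun.coeFn_mk _ _
  have hHc : ⇑H =ᵐ[P] η₀ := AEEqFun.coeFn_mk _ _
  have hsol : Ξ • x + H • y = 0 := by
    funext i
    show Ξ * x i + H * y i = 0
    refine AEEqFun.ext ?_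
    filter_upwards [AEEqFun.coeFn_add (Ξ * x i) (H * y i), AEEqFun.coeFn_mul Ξ (x i),
      AEEqFun.coeFn_mul H (y i), AEEqFun.coeFn_zero (β := ℝ) (μ := P), hΞc, hHc]
      with ω e1 e2 e3 e4 e5 e6
    rw [e1, e4]
    simp only [Pi.add_apply, Pi.zero_apply]
    rw [e2, e3]
    simp only [Pi.mul_apply]
    rw [e5, e6]
    exact hsolve ω i
  refine ⟨Bᶜ, B, hA, hB, Set.compl_inter_self B, Set.compl_union_self B, ?_, ?_, ?_⟩
  · -- property (2)
    intro ξ η h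
    have hforce := forceA ξ η h
    constructor <;>
    · refine AEEqFun.ext ?_
      filter_upwards [AEEqFun.coeFn_mul (ind P hA) ξ, AEEqFun.coeFn_mul (ind P hA) η,
        AEEqFun.coeFn_mk (Bᶜ.indicator fun _ => (1:ℝ))
          (aestronglyMeasurable_const.indicator hA),
        AEEqFun.coeFn_zero (β := ℝ) (μ := P), hforce] with ω e1 e1' eind e0 hf
      first
      | rw [e1, e0]
      | rw [e1', e0]
      simp only [Pi.mul_apply, Pi.zero_apply]
      show (ind P hA) ω * _ = 0
      rw [show (ind P hA) ω = Bᶜ.indicator (fun _ => (1:ℝ)) ω from eind]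
      by_cases hωA : ω ∈ Bᶜ
      · rw [Set.indicator_of_mem hωA]
        rcases hf hωA with ⟨h1, h2⟩
        first | rw [h1] | rw [h2]
        ring
      · rw [Set.indicator_of_notMem hωA]; ring
  · -- property (3a)
    intro hindep
    obtain ⟨hΞ0, hH0⟩ := hindep Ξ H hsol
    have hΞ0' : ⇑Ξ =ᵐ[P] 0 := by rw [hΞ0]; exact AEEqFun.coeFn_zero
    have hH0' : ⇑H =ᵐ[P] 0 := by rw [hH0]; exact AEEqFun.coeFn_zero
    have : ∀ᵐ ω ∂P, ω ∉ B := by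
      filter_upwards [hΞc.symm.trans hΞ0', hHc.symm.trans hH0'] with ω e1 e2 hωB
      exact hnontriv ω hωB (by simp only [Pi.zero_apply] at e1 e2; rw [e1, e2]; simp)
    exact measure_eq_zero_iff_ae_notMem.mpr this
  · -- property (3b)
    intro hnindep
    constructor
    · by_contra hpos
      push_neg at hpos
      have hPB : P B = 0 := le_antisymm (by simpa using hpos) zero_le
      refine hnindep fun ξ η h => ?_
      have hBae : ∀ᵐ ω ∂P, ω ∉ B := measure_eq_zero_iff_ae_notMem.mp hPB
      have h0 : ∀ᵐ ω ∂P, ξ ω = 0 ∧ η ω = 0 := by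
        filter_upwards [forceA ξ η h, hBae] with ω hf hω
        exact hf hω
      constructor <;>
      · refine AEEqFun.ext ?_
        filter_upwards [h0, AEEqFun.coeFn_zero (β := ℝ) (μ := P)] with ω e1 e2
        rw [e2]
        simp only [Pi.zero_apply]
        first | exact e1.1 | exact e1.2
    · refine ⟨Ξ, H, ?_, hsol⟩
      filter_upwards [hΞc, hHc] with ω e1 e2 hωB
      rw [e1, e2]
      exact hnontriv ω hωB
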